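/- Let (a_{n,k}) be a lower triangular nonnegative matrix with row sums equal to 1 satisfying a_μ ≤ (K+1)·a_{n,n} for all μ ≤ n (e.g., under the HBVS condition), and let w be a modulus-of-continuity-type function satisfying the conditions (u^{p/q} ∫_u^π w(t)^p/t^{1+p/q} dt)^{1/p} = O(u·H(u)) and ∫_0^t H(u)du = O(t·H(t)) as u, t → 0⁺, with 1 < p ≤ q. Then ∑_{k=0}^n a_{n,k} · w(π/(k+1))^q = O((a_{n,n}·H(a_{n,n}))^q) as n → ∞, provided a_{n,n} → 0. -/

import Mathlib

open Real Set Filter MeasureTheory intervalIntegral Finset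

lemma aux_convex (s : ℝ) (hs : 1 ≤ s) {x y z b : ℝ} (hz0 : 0 ≤ z) (hzy : z ≤ y)
    (hy0 : 0 ≤ y) (hb : 0 ≤ b) (hxy : x = y + b) :
    y ^ s + z ^ (s - 1) * b ≤ x ^ s := by
  have hx0 : 0 ≤ x := by rw [hxy]; positivity
  rcases eq_or_lt_of_le hx0 with h0 | hxpos
  · have hy : y = 0 := by nlinarith
    have hbb : b = 0 := by nlinarith
    subst hy hbb
    rw [← h0]
    simp [Real.zero_rpow (by positivity : s ≠ 0), mul_zero]
  · have hxs : x ^ s = x * x ^ (s - 1) := by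
      rw [← Real.rpow_one_add' hx0 (by simp; intro h; linarith)]
      ring_nf
    have h1 : y * y ^ (s - 1) ≤ y * x ^ (s - 1) := by
      apply mul_le_mul_of_nonneg_left _ hy0
      exact Real.rpow_le_rpow hy0 (by linarith [hxy, hb]) (by linarith)
    have h2 : z ^ (s - 1) * b ≤ x ^ (s - 1) * b := by
      apply mul_le_mul_of_nonneg_right _ hb
      exact Real.rpow_le_rpow hz0 (by linarith) (by linarith)
    have hys : y ^ s = y * y ^ (s - 1) := by
      rcases eq_or_lt_of_le hy0 with h | h
      · rw [← h]; simp [Real.zero_rpow (by positivity : s ≠ 0)]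
      · rw [← Real.rpow_one_add' hy0 (by simp; intro hh; linarith)]
        ring_nf
    calc y ^ s + z ^ (s - 1) * b ≤ y * x ^ (s - 1) + x ^ (s - 1) * b := by
          rw [hys]; exact add_le_add h1 h2
      _ = x * x ^ (s - 1) := by rw [hxy]; ring
      _ = x ^ s := hxs.symm

lemma powersum (s : ℝ) (hs : 1 ≤ s) (b : ℕ → ℝ) (hb0 : ∀ k, 0 ≤ b k)
    (hmono : ∀ j k, 1 ≤ j → j ≤ k → b k ≤ b j) (N : ℕ) :
    ∑ k ∈ Finset.Icc 1 N, ((k : ℝ) - 1) ^ (s - 1) * b k ^ s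
      ≤ (∑ k ∈ Finset.Icc 1 N, b k) ^ s := by
  induction N with
  | zero =>
    rw [show Finset.Icc 1 0 = ∅ by rfl]
    simp [Real.zero_rpow (by positivity : s ≠ 0)]
  | succ N ih =>
    rw [Finset.sum_Icc_succ_top (by omega), Finset.sum_Icc_succ_top (by omega)]
    set S := ∑ k ∈ Finset.Icc 1 N, b k with hS
    have hSnn : 0 ≤ S := Finset.sum_nonneg fun k _ => hb0 k
    have hzS : (N : ℝ) * b (N + 1) ≤ S := by
      calc (N : ℝ) * b (N + 1) = ∑ _k ∈ Finset.Icc 1 N, b (N + 1) := by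
            rw [Finset.sum_const, Nat.card_Icc, nsmul_eq_mul]; norm_num
        _ ≤ S := Finset.sum_le_sum fun k hk => hmono k (N+1) (Finset.mem_Icc.mp hk).1
            (by have := (Finset.mem_Icc.mp hk).2; omega)
    have key := aux_convex s hs (x := S + b (N+1)) (y := S) (z := (N:ℝ) * b (N+1))
      (mul_nonneg (Nat.cast_nonneg N) (hb0 _)) hzS hSnn (hb0 _) rfl
    have hterm : (((N + 1 : ℕ) : ℝ) - 1) ^ (s - 1) * b (N+1) ^ s
        = ((N:ℝ) * b (N+1)) ^ (s-1) * b (N+1) := by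
      rw [Real.mul_rpow (by positivity) (hb0 _)]
      have : b (N+1) ^ s = b (N+1) ^ (s-1) * b (N+1) := by
        nth_rewrite 3 [← Real.rpow_one (b (N+1))]
        rw [← Real.rpow_add' (hb0 _) (ne_of_gt (by linarith : (0:ℝ) < s - 1 + 1))]
        norm_num
      rw [this]
      push_cast
      ring
    rw [hterm]
    calc ∑ k ∈ Finset.Icc 1 N, ((k : ℝ) - 1) ^ (s - 1) * b k ^ s
          + ((N:ℝ) * b (N+1)) ^ (s-1) * b (N+1)
        ≤ S ^ s + ((N:ℝ) * b (N+1)) ^ (s-1) * b (N+1) := by linarith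
      _ ≤ (S + b (N+1)) ^ s := key

lemma e4_lemma (piv x pr xr W : ℝ) (hπ : 0 < piv) (hx : 0 < x) (hx1 : 0 < x+1)
    (hpr : 0 < pr) (hxr : 0 < xr) :
    2 * pr * ((piv/(x*(x+1))) * (W / (piv * pr / (x * xr)))) = 2 * W * (xr/(x+1)) := by
  have h1 : piv ≠ 0 := ne_of_gt hπ
  have h2 : pr ≠ 0 := ne_of_gt hpr
  have h3 : x ≠ 0 := ne_of_gt hx
  have h4 : xr ≠ 0 := ne_of_gt hxr
  have h5 : x + 1 ≠ 0 := ne_of_gt hx1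
  field_simp

set_option maxHeartbeats 4000000 in
/-- The key estimate in the proof of Theorem 1:
`∑_{k=0}^n a_{n,k} w(π/(k+1))^q = O((a_{n,n} H(a_{n,n}))^q)`. -/
theorem matrix_modulus_sum_bound
    (a : ℕ → ℕ → ℝ) (w H : ℝ → ℝ) (p q K : ℝ)
    (hmat_nonneg : ∀ n k, 0 ≤ a n k)
    (hmat_tri : ∀ n k, n < k → a n k = 0)
    (hmat_row : ∀ n, ∑ k ∈ Finset.range (n + 1), a n k = 1)
    (hK : 0 ≤ K)
    (hbound : ∀ n μ m, μ ≤ m → m ≤ n → a n μ ≤ (K + 1) * a n m)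
    (hw0 : w 0 = 0) (hwmono : Monotone w) (hwcont : Continuous w)
    (hwsub : ∀ x y : ℝ, 0 ≤ x → 0 ≤ y → w (x + y) ≤ w x + w y)
    (hwnonneg : ∀ x, 0 ≤ w x)
    (hHnonneg : ∀ u ∈ Set.Ioc (0:ℝ) π, 0 ≤ H u)
    (hp : 1 < p) (hpq : p ≤ q)
    (C₁ C₂ : ℝ) (hC₁ : 0 < C₁) (hC₂ : 0 < C₂)
    (hcond6 : ∀ u ∈ Set.Ioc (0:ℝ) π,
      (u ^ (p / q) * ∫ t in u..π, (w t) ^ p / t ^ (1 + p / q)) ^ (1 / p)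
        ≤ C₁ * (u * H u))
    (hcond7 : ∀ t ∈ Set.Ioc (0:ℝ) π,
      (∫ u in (0:ℝ)..t, H u) ≤ C₂ * (t * H t))
    (hdiag : ∀ n, a n n ∈ Set.Ioc (0:ℝ) π)
    (hdiag0 : Filter.Tendsto (fun n => a n n) Filter.atTop (nhds 0)) :
    ∃ C : ℝ, 0 < C ∧ ∀ n : ℕ,
      ∑ k ∈ Finset.range (n + 1), a n k * (w (π / (k + 1))) ^ q
        ≤ C * (a n n * H (a n n)) ^ q := by
  have hp0 : (0:ℝ) < p := by linarith
  have hq0 : (0:ℝ) < q := by linarith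
  set r : ℝ := p / q with hr_def
  set s : ℝ := q / p with hs_def
  have hr0 : 0 < r := by positivity
  have hr1 : r ≤ 1 := by rw [hr_def, div_le_one hq0]; exact hpq
  have hs1 : 1 ≤ s := by rw [hs_def, le_div_iff₀ hp0]; linarith
  have hs0 : 0 < s := by linarith
  have hrs : r * s = 1 := by rw [hr_def, hs_def]; field_simp
  have hps : p * s = q := by rw [hs_def]; field_simp
  have hpi : (3:ℝ) < π := pi_gt_three
  clear_value r s
  have h1r : (0:ℝ) < 1 + r := by linarith
  set f : ℝ → ℝ := fun t => w t ^ p / t ^ (1 + r) with hf_def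
  -- basic facts about f
  have hfc : ContinuousOn f {t : ℝ | 0 < t} := by
    apply ContinuousOn.div
    · exact ((Real.continuous_rpow_const hp0.le).comp hwcont).continuousOn
    · exact (Real.continuous_rpow_const (by positivity)).continuousOn
    · intro t ht
      exact ne_of_gt (Real.rpow_pos_of_pos ht (1 + r))
  have hfint : ∀ A B : ℝ, 0 < A → 0 < B → IntervalIntegrable f volume A B := by
    intro A B hA hB
    apply ContinuousOn.intervalIntegrable
    apply hfc.mono
    intro t ht
    rw [Set.mem_uIcc] at ht
    simp only [Set.mem_setOf_eq]
    rcases ht with h | h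
    · linarith [h.1]
    · linarith [h.1]
  have hfnn : ∀ t : ℝ, 0 < t → 0 ≤ f t := by
    intro t ht
    exact div_nonneg (Real.rpow_nonneg (hwnonneg t) p) (Real.rpow_pos_of_pos ht (1+r)).le
  have hblock : ∀ A B c : ℝ, 0 < A → A ≤ B → (∀ t ∈ Set.Icc A B, c ≤ f t) →
      (B - A) * c ≤ ∫ t in A..B, f t := by
    intro A B c hA hAB hcf
    have := intervalIntegral.integral_mono_on (f := fun _ => c) (g := f) hAB
      (intervalIntegrable_const) (hfint A B hA (by linarith)) hcf
    rwa [intervalIntegral.integral_const, smul_eq_mul] at this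
  have hfblock : ∀ A B : ℝ, 0 < A → A ≤ B →
      (B - A) * (w A ^ p / B ^ (1 + r)) ≤ ∫ t in A..B, f t := by
    intro A B hA hAB
    apply hblock A B _ hA hAB
    intro t ht
    obtain ⟨ht1, ht2⟩ := ht
    have ht0 : 0 < t := lt_of_lt_of_le hA ht1
    apply div_le_div₀ (Real.rpow_nonneg (hwnonneg t) p)
      (Real.rpow_le_rpow (hwnonneg A) (hwmono ht1) hp0.le)
      (Real.rpow_pos_of_pos ht0 (1+r))
      (Real.rpow_le_rpow ht0.le ht2 (by positivity))
  clear_value f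
  -- the one-step telescoping estimate
  have hstep : ∀ x : ℝ, 1 ≤ x →
      (π/x - π/(x+1)) * (w (π/(x+1)) ^ p / (π/x) ^ (1+r)) + (∫ t in (π/x)..π, f t)
        ≤ ∫ t in (π/(x+1))..π, f t := by
    intro x hx
    have hx0 : (0:ℝ) < x := by linarith
    have hpos1 : (0:ℝ) < π/(x+1) := by positivity
    have hpos2 : (0:ℝ) < π/x := by positivity
    have hAB : π/(x+1) ≤ π/x :=
      div_le_div_of_nonneg_left pi_pos.le hx0 (by linarith)
    have hblk := hfblock (π/(x+1)) (π/x) hpos1 hAB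
    have hsplit : (∫ t in (π/(x+1))..(π/x), f t) + (∫ t in (π/x)..π, f t)
        = ∫ t in (π/(x+1))..π, f t :=
      intervalIntegral.integral_add_adjacent_intervals
        (hfint _ _ hpos1 hpos2) (hfint _ _ hpos2 pi_pos)
    linarith
  -- telescoping block sum
  have hblocksum : ∀ j : ℕ,
      ∑ k ∈ Finset.Icc 1 j,
        (π/(k:ℝ) - π/((k:ℝ)+1)) * (w (π/((k:ℝ)+1)) ^ p / (π/(k:ℝ)) ^ (1+r))
        ≤ ∫ t in (π/((j:ℝ)+1))..π, f t := by
    intro j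
    induction j with
    | zero =>
      rw [show Finset.Icc 1 0 = ∅ by rfl, Finset.sum_empty,
        show π/(((0:ℕ):ℝ)+1) = π by norm_num, intervalIntegral.integral_same]
    | succ j ih =>
      rw [Finset.sum_Icc_succ_top (by omega)]
      push_cast
      have hj1 : (1:ℝ) ≤ (j:ℝ) + 1 := by
        have h : (0:ℝ) ≤ (j:ℝ) := Nat.cast_nonneg j
        linarith
      calc (∑ k ∈ Finset.Icc 1 j,
              (π/(k:ℝ) - π/((k:ℝ)+1)) * (w (π/((k:ℝ)+1)) ^ p / (π/(k:ℝ)) ^ (1+r)))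
            + (π/((j:ℝ)+1) - π/((j:ℝ)+1+1)) * (w (π/((j:ℝ)+1+1)) ^ p / (π/((j:ℝ)+1)) ^ (1+r))
          ≤ (∫ t in (π/((j:ℝ)+1))..π, f t)
            + (π/((j:ℝ)+1) - π/((j:ℝ)+1+1)) * (w (π/((j:ℝ)+1+1)) ^ p / (π/((j:ℝ)+1)) ^ (1+r)) := by
            exact add_le_add_left ih _
        _ ≤ ∫ t in (π/((j:ℝ)+1+1))..π, f t := by
            have := hstep ((j:ℝ)+1) hj1
            linarith
  -- global constants
  set Cbig : ℝ := (K+1)*((2^q+1)*4^s*π + 3^(s-1)*2^s*π) + 4^q*4^s with hCbig_def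
  have hCbig0 : 0 < Cbig := by positivity
  refine ⟨Cbig * C₁^q + 1, by positivity, ?_⟩
  intro n
  obtain ⟨hm0, hmπ⟩ := hdiag n
  set m : ℝ := a n n with hm_def
  have hm1 : m ≤ 1 := by
    have h := Finset.single_le_sum (f := fun k => a n k)
      (fun k _ => hmat_nonneg n k) (Finset.self_mem_range_succ n)
    rw [hmat_row n] at h
    exact h
  clear_value m
  set M : ℕ := Nat.floor (1/m) with hM_def
  have hminv : (1:ℝ) ≤ 1/m := by rw [le_div_iff₀ hm0]; linarith
  have hM1 : 1 ≤ M := Nat.le_floor (by exact_mod_cast hminv)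
  have hMle : (M:ℝ) ≤ 1/m := Nat.floor_le (by positivity)
  have hMm1 : (M:ℝ) * m ≤ 1 := by
    have := mul_le_mul_of_nonneg_right hMle hm0.le
    rwa [one_div_mul_cancel (ne_of_gt hm0)] at this
  have hMgt : 1/m < (M:ℝ) + 1 := Nat.lt_floor_add_one _
  have hMgt' : (1:ℝ) < m * ((M:ℝ)+1) := by
    have := mul_lt_mul_of_pos_left hMgt hm0
    rwa [mul_one_div, div_self (ne_of_gt hm0)] at this
  clear_value M
  set I : ℝ := ∫ t in m..π, f t with hI_def
  have hI0 : 0 ≤ I :=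
    intervalIntegral.integral_nonneg (by linarith)
      (fun u hu => hfnn u (lt_of_lt_of_le hm0 hu.1))
  have hIsub : ∀ A B : ℝ, m ≤ A → A ≤ B → B ≤ π → (∫ t in A..B, f t) ≤ I := by
    intro A B h1 h2 h3
    have hA0 : 0 < A := lt_of_lt_of_le hm0 h1
    have hB0 : 0 < B := lt_of_lt_of_le hA0 h2
    have e1 : (∫ t in m..A, f t) + (∫ t in A..B, f t) = ∫ t in m..B, f t :=
      intervalIntegral.integral_add_adjacent_intervals (hfint _ _ hm0 hA0) (hfint _ _ hA0 hB0)
    have e2 : (∫ t in m..B, f t) + (∫ t in B..π, f t) = I :=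
      intervalIntegral.integral_add_adjacent_intervals (hfint _ _ hm0 hB0) (hfint _ _ hB0 pi_pos)
    have n1 : 0 ≤ ∫ t in m..A, f t :=
      intervalIntegral.integral_nonneg h1 (fun u hu => hfnn u (lt_of_lt_of_le hm0 hu.1))
    have n2 : 0 ≤ ∫ t in B..π, f t :=
      intervalIntegral.integral_nonneg h3 (fun u hu => hfnn u (lt_of_lt_of_le hB0 hu.1))
    linarith
  clear_value I
  -- (F1) : w m ^ p ≤ 4 * m ^ r * I
  have hF1 : w m ^ p ≤ 4 * m ^ r * I := by
    have h2m : m ≤ 2*m := by linarith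
    have hblk := hfblock m (2*m) hm0 h2m
    have hsub := hIsub m (2*m) le_rfl h2m (by linarith)
    have e2m : (2*m) ^ (1+r) = 2^(1+r) * (m * m^r) := by
      rw [Real.mul_rpow (by norm_num) hm0.le,
        Real.rpow_one_add' hm0.le (ne_of_gt h1r)]
    have h2r : (2:ℝ)^(1+r) ≤ 4 := by
      calc (2:ℝ)^(1+r) ≤ 2^(2:ℝ) :=
            Real.rpow_le_rpow_of_exponent_le one_le_two (by linarith)
        _ = 4 := by
            rw [show (2:ℝ) = ((2:ℕ):ℝ) by norm_num, Real.rpow_natCast]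
            norm_num
    rw [e2m] at hblk
    have hmr : (0:ℝ) < m^r := Real.rpow_pos_of_pos hm0 r
    have e3 : (2*m - m) * (w m ^ p / (2^(1+r) * (m * m^r))) =
        w m ^ p / (2^(1+r) * m^r) := by
      have h2p : (0:ℝ) < 2^(1+r) := Real.rpow_pos_of_pos (by norm_num) _
      field_simp
      ring
    rw [e3] at hblk
    have h2p : (0:ℝ) < 2^(1+r) := Real.rpow_pos_of_pos (by norm_num) _
    have hIub : w m ^ p / (2^(1+r) * m^r) ≤ I := le_trans hblk hsub
    rw [div_le_iff₀ (by positivity)] at hIub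
    calc w m ^ p ≤ I * (2^(1+r) * m^r) := hIub
      _ ≤ 4 * m^r * I := by nlinarith [mul_nonneg (mul_nonneg (sub_nonneg.mpr h2r) hmr.le) hI0]
  -- the sequence b
  set b : ℕ → ℝ := fun k => w (π/((k:ℝ)+1)) ^ p * ((k:ℝ)+1)^(r-1) with hb_def
  have hb0 : ∀ k, 0 ≤ b k := fun k =>
    mul_nonneg (Real.rpow_nonneg (hwnonneg _) p) (Real.rpow_nonneg (by positivity) _)
  have hbmono : ∀ j k, 1 ≤ j → j ≤ k → b k ≤ b j := by
    intro j k _ hjk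
    have hjk' : ((j:ℝ)+1) ≤ (k:ℝ)+1 := by
      have : (j:ℝ) ≤ (k:ℝ) := Nat.cast_le.mpr hjk
      linarith
    have h1 : π/((k:ℝ)+1) ≤ π/((j:ℝ)+1) :=
      div_le_div_of_nonneg_left pi_pos.le (by positivity) hjk'
    apply mul_le_mul
    · exact Real.rpow_le_rpow (hwnonneg _) (hwmono h1) hp0.le
    · exact Real.rpow_le_rpow_of_nonpos (by positivity) hjk' (by linarith)
    · exact Real.rpow_nonneg (by positivity) _
    · exact Real.rpow_nonneg (hwnonneg _) _
  -- termwise comparison of b with the block integrals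
  have hLk : ∀ k : ℕ, 1 ≤ k → b k ≤ 2 * π^r *
      ((π/(k:ℝ) - π/((k:ℝ)+1)) * (w (π/((k:ℝ)+1)) ^ p / (π/(k:ℝ)) ^ (1+r))) := by
    intro k hk
    have hx1 : (1:ℝ) ≤ (k:ℝ) := by exact_mod_cast hk
    set x : ℝ := (k:ℝ) with hx_def
    have hx0 : (0:ℝ) < x := by linarith
    have hx10 : (0:ℝ) < x + 1 := by linarith
    have hπr : (0:ℝ) < π^r := Real.rpow_pos_of_pos pi_pos r
    have hxr : (0:ℝ) < x^r := Real.rpow_pos_of_pos hx0 r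
    have e1 : (π/x)^(1+r) = π * π^r / (x * x^r) := by
      rw [Real.div_rpow pi_pos.le hx0.le,
        Real.rpow_one_add' pi_pos.le (ne_of_gt h1r),
        Real.rpow_one_add' hx0.le (ne_of_gt h1r)]
    have e2 : π/x - π/(x+1) = π / (x*(x+1)) := by
      field_simp
      ring
    have hwp : 0 ≤ w (π/(x+1)) ^ p := Real.rpow_nonneg (hwnonneg _) p
    have h2xr : (x+1)^r ≤ 2 * x^r := by
      have h2r2 : (2:ℝ)^r ≤ 2 := by
        calc (2:ℝ)^r ≤ 2^(1:ℝ) := Real.rpow_le_rpow_of_exponent_le one_le_two hr1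
          _ = 2 := Real.rpow_one 2
      calc (x+1)^r ≤ (2*x)^r := Real.rpow_le_rpow (by linarith) (by linarith) hr0.le
        _ = 2^r * x^r := Real.mul_rpow (by norm_num) hx0.le
        _ ≤ 2 * x^r := mul_le_mul_of_nonneg_right h2r2 hxr.le
    have e3 : ((x+1):ℝ)^(r-1) = (x+1)^r / (x+1) := by
      rw [Real.rpow_sub hx10, Real.rpow_one]
    have e4 : 2 * π^r * ((π/x - π/(x+1)) * (w (π/(x+1)) ^ p / (π/x)^(1+r)))
        = 2 * w (π/(x+1)) ^ p * (x^r/(x+1)) := by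
      rw [e2, e1]
      exact e4_lemma π x (π^r) (x^r) _ pi_pos hx0 hx10 hπr hxr
    rw [e4]
    show w (π/(x+1)) ^ p * (x+1)^(r-1) ≤ 2 * w (π/(x+1)) ^ p * (x^r/(x+1))
    rw [e3]
    calc w (π/(x+1)) ^ p * ((x+1)^r/(x+1)) = (w (π/(x+1)) ^ p * (x+1)^r)/(x+1) := by ring
      _ ≤ (2 * w (π/(x+1)) ^ p * x^r)/(x+1) := by
          apply div_le_div₀ (mul_nonneg (mul_nonneg (by norm_num) hwp) hxr.le) ?_ hx10 le_rfl
          calc w (π/(x+1)) ^ p * (x+1)^r ≤ w (π/(x+1)) ^ p * (2*x^r) :=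
                mul_le_mul_of_nonneg_left h2xr hwp
            _ = 2 * w (π/(x+1)) ^ p * x^r := by ring
      _ = 2 * w (π/(x+1)) ^ p * (x^r/(x+1)) := by ring
  -- sum of b against the integral
  have hbsum : ∑ k ∈ Finset.Icc 1 (M+1), b k ≤ 2 * π^r * I := by
    have hmM2 : m ≤ π/((M:ℝ)+2) := by
      rw [le_div_iff₀ (by positivity), show m*((M:ℝ)+2) = (M:ℝ)*m + 2*m by ring]
      linarith
    have h1 := hblocksum (M+1)
    have hend : (((M+1:ℕ)):ℝ) + 1 = (M:ℝ)+2 := by push_cast; ring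
    rw [hend] at h1
    have h2 : (∫ t in (π/((M:ℝ)+2))..π, f t) ≤ I := by
      apply hIsub _ π hmM2 _ le_rfl
      apply div_le_self pi_pos.le
      have : (0:ℝ) ≤ (M:ℝ) := Nat.cast_nonneg M
      linarith
    have h3 : ∑ k ∈ Finset.Icc 1 (M+1), b k ≤ ∑ k ∈ Finset.Icc 1 (M+1), 2 * π^r *
        ((π/(k:ℝ) - π/((k:ℝ)+1)) * (w (π/((k:ℝ)+1)) ^ p / (π/(k:ℝ)) ^ (1+r))) :=
      Finset.sum_le_sum (fun k hk => hLk k (Finset.mem_Icc.mp hk).1)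
    rw [← Finset.mul_sum] at h3
    calc ∑ k ∈ Finset.Icc 1 (M+1), b k ≤ 2*π^r * ∑ k ∈ Finset.Icc 1 (M+1),
          ((π/(k:ℝ) - π/((k:ℝ)+1)) * (w (π/((k:ℝ)+1)) ^ p / (π/(k:ℝ)) ^ (1+r))) := h3
      _ ≤ 2*π^r * I := by
          apply mul_le_mul_of_nonneg_left (le_trans h1 h2)
          positivity
  have hbsum0 : 0 ≤ ∑ k ∈ Finset.Icc 1 (M+1), b k := Finset.sum_nonneg (fun k _ => hb0 k)
  -- middle part of the head sum
  have hps1 := powersum s hs1 b hb0 hbmono (M+1)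
  have hterm : ∀ k ∈ Finset.Icc 2 (M+1), w (π/((k:ℝ)+1)) ^ q
      ≤ 3^(s-1) * (((k:ℝ)-1)^(s-1) * b k ^ s) := by
    intro k hk
    have hk2 : 2 ≤ k := (Finset.mem_Icc.mp hk).1
    have hx2 : (2:ℝ) ≤ (k:ℝ) := by exact_mod_cast hk2
    set x : ℝ := (k:ℝ) with hx_def
    have hx10 : (0:ℝ) < x + 1 := by linarith
    have hx1m : (0:ℝ) < x - 1 := by linarith
    have e5 : b k ^ s = w (π/(x+1)) ^ q * (x+1)^(1-s) := by
      show (w (π/(x+1)) ^ p * (x+1)^(r-1)) ^ s = _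
      rw [Real.mul_rpow (Real.rpow_nonneg (hwnonneg _) p) (Real.rpow_nonneg (by linarith) _),
        ← Real.rpow_mul (hwnonneg _), hps, ← Real.rpow_mul (by linarith : (0:ℝ) ≤ x+1),
        show (r-1)*s = 1-s by rw [sub_mul, hrs, one_mul]]
    have key : 1 ≤ 3^(s-1) * ((x-1)^(s-1) * (x+1)^(1-s)) := by
      have hA : (x+1)^(s-1) ≤ 3^(s-1)*(x-1)^(s-1) := by
        calc (x+1)^(s-1) ≤ (3*(x-1))^(s-1) :=
              Real.rpow_le_rpow (by linarith) (by linarith) (by linarith)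
          _ = 3^(s-1)*(x-1)^(s-1) := Real.mul_rpow (by norm_num) (by linarith)
      have hB : (x+1)^(1-s) * (x+1)^(s-1) = 1 := by
        rw [← Real.rpow_add hx10]
        norm_num
      calc (1:ℝ) = (x+1)^(1-s) * (x+1)^(s-1) := hB.symm
        _ ≤ (x+1)^(1-s) * (3^(s-1)*(x-1)^(s-1)) :=
            mul_le_mul_of_nonneg_left hA (Real.rpow_nonneg (by linarith) _)
        _ = 3^(s-1) * ((x-1)^(s-1)*(x+1)^(1-s)) := by ring
    calc w (π/(x+1)) ^ q = w (π/(x+1)) ^ q * 1 := by ring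
      _ ≤ w (π/(x+1)) ^ q * (3^(s-1) * ((x-1)^(s-1) * (x+1)^(1-s))) :=
          mul_le_mul_of_nonneg_left key (Real.rpow_nonneg (hwnonneg _) q)
      _ = 3^(s-1) * ((x-1)^(s-1) * b k ^ s) := by rw [e5]; ring
  have hmid : ∑ k ∈ Finset.Icc 2 (M+1), w (π/((k:ℝ)+1)) ^ q ≤ 3^(s-1) * (2*π^r*I)^s := by
    calc ∑ k ∈ Finset.Icc 2 (M+1), w (π/((k:ℝ)+1)) ^ q
        ≤ ∑ k ∈ Finset.Icc 2 (M+1), 3^(s-1) * (((k:ℝ)-1)^(s-1) * b k ^ s) :=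
          Finset.sum_le_sum hterm
      _ = 3^(s-1) * ∑ k ∈ Finset.Icc 2 (M+1), (((k:ℝ)-1)^(s-1) * b k ^ s) := by
          rw [← Finset.mul_sum]
      _ ≤ 3^(s-1) * ∑ k ∈ Finset.Icc 1 (M+1), (((k:ℝ)-1)^(s-1) * b k ^ s) := by
          apply mul_le_mul_of_nonneg_left _ (Real.rpow_nonneg (by norm_num) _)
          apply Finset.sum_le_sum_of_subset_of_nonneg (Finset.Icc_subset_Icc (by norm_num) le_rfl)
          intro k hk _
          have hk1 : 1 ≤ k := (Finset.mem_Icc.mp hk).1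
          have : (1:ℝ) ≤ (k:ℝ) := by exact_mod_cast hk1
          exact mul_nonneg (Real.rpow_nonneg (by linarith) _) (Real.rpow_nonneg (hb0 k) s)
      _ ≤ 3^(s-1) * (∑ k ∈ Finset.Icc 1 (M+1), b k)^s :=
          mul_le_mul_of_nonneg_left hps1 (Real.rpow_nonneg (by norm_num) _)
      _ ≤ 3^(s-1) * (2*π^r*I)^s := by
          apply mul_le_mul_of_nonneg_left _ (Real.rpow_nonneg (by norm_num) _)
          exact Real.rpow_le_rpow hbsum0 hbsum hs0.le
  -- the tail term
  have htail : w (π/((M:ℝ)+1)) ^ q ≤ 4^q * (4*m^r*I)^s := by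
    have hπM : π/((M:ℝ)+1) ≤ 4*m := by
      have h1 : π/((M:ℝ)+1) ≤ π*m := by
        rw [div_le_iff₀ (by positivity)]
        nlinarith [mul_le_mul_of_nonneg_left hMgt'.le pi_pos.le]
      have h2 : π*m ≤ 4*m := mul_le_mul_of_nonneg_right (by linarith [pi_le_four]) hm0.le
      linarith
    have hw4m : w (4*m) ≤ 4 * w m := by
      have h1 := hwsub (2*m) (2*m) (by linarith) (by linarith)
      have h2 := hwsub m m hm0.le hm0.le
      have h1' : w (4*m) ≤ w (2*m) + w (2*m) := by
        rw [show (4:ℝ)*m = 2*m + 2*m by ring]; exact h1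
      have h2' : w (2*m) ≤ w m + w m := by
        rw [show (2:ℝ)*m = m + m by ring]; exact h2
      linarith
    calc w (π/((M:ℝ)+1)) ^ q ≤ (4 * w m)^q :=
          Real.rpow_le_rpow (hwnonneg _) (le_trans (hwmono hπM) hw4m) hq0.le
      _ = 4^q * (w m)^q := Real.mul_rpow (by norm_num) (hwnonneg m)
      _ = 4^q * ((w m ^ p) ^ s) := by
          rw [← Real.rpow_mul (hwnonneg m), hps]
      _ ≤ 4^q * (4*m^r*I)^s := by
          apply mul_le_mul_of_nonneg_left _ (Real.rpow_nonneg (by norm_num) q)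
          exact Real.rpow_le_rpow (Real.rpow_nonneg (hwnonneg m) p) hF1 hs0.le
  -- the first two head terms
  have hv1 : w (π/2) ^ p ≤ 4 * π^r * I := by
    have hb1I : b 1 ≤ 2*π^r*I :=
      le_trans (Finset.single_le_sum (fun k _ => hb0 k)
        (Finset.mem_Icc.mpr ⟨le_rfl, by omega⟩)) hbsum
    have e : b 1 = w (π/2)^p * (2:ℝ)^(r-1) := by
      show w (π/(((1:ℕ):ℝ)+1)) ^ p * (((1:ℕ):ℝ)+1)^(r-1) = _
      norm_num
    have h2r : (1/2 : ℝ) ≤ (2:ℝ)^(r-1) := by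
      have h := Real.rpow_le_rpow_of_exponent_le one_le_two (show (-1:ℝ) ≤ r-1 by linarith)
      rwa [Real.rpow_neg_one, show ((2:ℝ))⁻¹ = 1/2 by norm_num] at h
    have h3 : w (π/2)^p * (1/2) ≤ 2*π^r*I := by
      calc w (π/2)^p * (1/2) ≤ w (π/2)^p * (2:ℝ)^(r-1) :=
            mul_le_mul_of_nonneg_left h2r (Real.rpow_nonneg (hwnonneg _) p)
        _ = b 1 := e.symm
        _ ≤ 2*π^r*I := hb1I
    linarith
  have hv1q : w (π/2)^q ≤ (4*π^r*I)^s := by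
    calc w (π/2)^q = (w (π/2)^p)^s := by rw [← Real.rpow_mul (hwnonneg _), hps]
      _ ≤ (4*π^r*I)^s := Real.rpow_le_rpow (Real.rpow_nonneg (hwnonneg _) p) hv1 hs0.le
  have hv0q : w π ^ q ≤ 2^q * (4*π^r*I)^s := by
    have h1 : w π ≤ 2 * w (π/2) := by
      have h := hwsub (π/2) (π/2) (by positivity) (by positivity)
      rw [show π/2 + π/2 = π by ring] at h
      linarith
    calc w π ^ q ≤ (2*w (π/2))^q := Real.rpow_le_rpow (hwnonneg _) h1 hq0.le
      _ = 2^q * (w (π/2))^q := Real.mul_rpow (by norm_num) (hwnonneg _)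
      _ ≤ 2^q * (4*π^r*I)^s :=
          mul_le_mul_of_nonneg_left hv1q (Real.rpow_nonneg (by norm_num) q)
  -- full head sum
  have hhead : ∑ k ∈ Finset.range (M+1), w (π/((k:ℝ)+1)) ^ q
      ≤ 2^q * (4*π^r*I)^s + (4*π^r*I)^s + 3^(s-1)*(2*π^r*I)^s := by
    have hsplit : Finset.range (M+1) = insert 0 (insert 1 (Finset.Icc 2 M)) := by
      ext k
      simp only [Finset.mem_range, Finset.mem_insert, Finset.mem_Icc]
      omega
    rw [hsplit, Finset.sum_insert (by simp), Finset.sum_insert (by simp)]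
    have t0 : w (π/(((0:ℕ):ℝ)+1)) ^ q = w π ^ q := by norm_num
    have t1 : w (π/(((1:ℕ):ℝ)+1)) ^ q = w (π/2) ^ q := by norm_num
    have t2 : ∑ k ∈ Finset.Icc 2 M, w (π/((k:ℝ)+1)) ^ q
        ≤ ∑ k ∈ Finset.Icc 2 (M+1), w (π/((k:ℝ)+1)) ^ q :=
      Finset.sum_le_sum_of_subset_of_nonneg (Finset.Icc_subset_Icc le_rfl (by omega))
        (fun k _ _ => Real.rpow_nonneg (hwnonneg _) q)
    rw [t0, t1]
    linarith
  -- decomposition of the main sum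
  have hsum1 : ∑ k ∈ Finset.range (n+1), a n k * w (π/((k:ℝ)+1))^q
      ≤ (K+1)*m*(∑ k ∈ Finset.range (M+1), w (π/((k:ℝ)+1))^q) + w (π/((M:ℝ)+1))^q := by
    have hstep1 : ∀ k ∈ Finset.range (n+1), a n k * w (π/((k:ℝ)+1))^q ≤
        (if k ≤ M then ((K+1)*m) * w (π/((k:ℝ)+1))^q else a n k * w (π/((M:ℝ)+1))^q) := by
      intro k hk
      rw [Finset.mem_range] at hk
      by_cases h : k ≤ M
      · rw [if_pos h]
        apply mul_le_mul_of_nonneg_right _ (Real.rpow_nonneg (hwnonneg _) q)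
        rw [hm_def]
        exact hbound n k n (by omega) le_rfl
      · rw [if_neg h]
        apply mul_le_mul_of_nonneg_left _ (hmat_nonneg n k)
        apply Real.rpow_le_rpow (hwnonneg _) _ hq0.le
        apply hwmono
        apply div_le_div_of_nonneg_left pi_pos.le (by positivity)
        have : (M:ℝ) ≤ (k:ℝ) := Nat.cast_le.mpr (by omega)
        linarith
    calc ∑ k ∈ Finset.range (n+1), a n k * w (π/((k:ℝ)+1))^q
        ≤ ∑ k ∈ Finset.range (n+1), (if k ≤ M then ((K+1)*m) * w (π/((k:ℝ)+1))^q
            else a n k * w (π/((M:ℝ)+1))^q) := Finset.sum_le_sum hstep1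
      _ = (∑ k ∈ (Finset.range (n+1)).filter (fun k => k ≤ M), ((K+1)*m) * w (π/((k:ℝ)+1))^q)
          + ∑ k ∈ (Finset.range (n+1)).filter (fun k => ¬ k ≤ M), a n k * w (π/((M:ℝ)+1))^q :=
          Finset.sum_ite _ _
      _ ≤ (K+1)*m*(∑ k ∈ Finset.range (M+1), w (π/((k:ℝ)+1))^q) + w (π/((M:ℝ)+1))^q := by
          apply add_le_add
          · rw [← Finset.mul_sum]
            apply mul_le_mul_of_nonneg_left _ (by positivity)
            apply Finset.sum_le_sum_of_subset_of_nonneg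
            · intro k hk
              simp only [Finset.mem_filter, Finset.mem_range] at hk ⊢
              omega
            · intro k _ _
              exact Real.rpow_nonneg (hwnonneg _) q
          · rw [← Finset.sum_mul]
            have hle1 : ∑ k ∈ (Finset.range (n+1)).filter (fun k => ¬ k ≤ M), a n k ≤ 1 := by
              rw [← hmat_row n]
              exact Finset.sum_le_sum_of_subset_of_nonneg (Finset.filter_subset _ _)
                (fun k _ _ => hmat_nonneg n k)
            calc (∑ k ∈ (Finset.range (n+1)).filter (fun k => ¬ k ≤ M), a n k)
                  * w (π/((M:ℝ)+1))^q
                ≤ 1 * w (π/((M:ℝ)+1))^q :=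
                  mul_le_mul_of_nonneg_right hle1 (Real.rpow_nonneg (hwnonneg _) q)
              _ = w (π/((M:ℝ)+1))^q := one_mul _
  -- relating m * I^s to (m * H m)^q via condition (6)
  have hHm0 : 0 ≤ H m := hHnonneg m ⟨hm0, hmπ⟩
  have hmIs : m * I^s ≤ C₁^q * (m * H m)^q := by
    have h6 := hcond6 m ⟨hm0, hmπ⟩
    rw [← hI_def] at h6
    have hmrI0 : 0 ≤ m^r * I := mul_nonneg (Real.rpow_nonneg hm0.le r) hI0
    have hB0 : 0 ≤ C₁ * (m * H m) := le_trans (Real.rpow_nonneg hmrI0 _) h6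
    have h7 : m^r * I ≤ (C₁*(m*H m))^p := by
      have h8 := Real.rpow_le_rpow (Real.rpow_nonneg hmrI0 _) h6 hp0.le
      rwa [← Real.rpow_mul hmrI0, one_div_mul_cancel (ne_of_gt hp0), Real.rpow_one] at h8
    have h9 : (m^r*I)^s ≤ ((C₁*(m*H m))^p)^s := Real.rpow_le_rpow hmrI0 h7 hs0.le
    have h10 : ((C₁*(m*H m))^p)^s = C₁^q * (m*H m)^q := by
      rw [← Real.rpow_mul hB0, hps, Real.mul_rpow hC₁.le (mul_nonneg hm0.le hHm0)]
    have h11 : (m^r*I)^s = m * I^s := by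
      rw [Real.mul_rpow (Real.rpow_nonneg hm0.le r) hI0, ← Real.rpow_mul hm0.le, hrs,
        Real.rpow_one]
    calc m * I^s = (m^r*I)^s := h11.symm
      _ ≤ ((C₁*(m*H m))^p)^s := h9
      _ = C₁^q * (m*H m)^q := h10
  -- expanding the power products
  have hP : (4*π^r*I)^s = 4^s * π * I^s := by
    rw [Real.mul_rpow (mul_nonneg (by norm_num) (Real.rpow_nonneg pi_pos.le r)) hI0,
      Real.mul_rpow (by norm_num) (Real.rpow_nonneg pi_pos.le r),
      ← Real.rpow_mul pi_pos.le, hrs, Real.rpow_one]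
  have hQ : (2*π^r*I)^s = 2^s * π * I^s := by
    rw [Real.mul_rpow (mul_nonneg (by norm_num) (Real.rpow_nonneg pi_pos.le r)) hI0,
      Real.mul_rpow (by norm_num) (Real.rpow_nonneg pi_pos.le r),
      ← Real.rpow_mul pi_pos.le, hrs, Real.rpow_one]
  have hR : (4*m^r*I)^s = 4^s * m * I^s := by
    rw [Real.mul_rpow (mul_nonneg (by norm_num) (Real.rpow_nonneg hm0.le r)) hI0,
      Real.mul_rpow (by norm_num) (Real.rpow_nonneg hm0.le r),
      ← Real.rpow_mul hm0.le, hrs, Real.rpow_one]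
  -- final assembly
  have hIs0 : 0 ≤ I^s := Real.rpow_nonneg hI0 s
  have hfinal : ∑ k ∈ Finset.range (n+1), a n k * w (π/((k:ℝ)+1))^q
      ≤ Cbig * (m * I^s) := by
    have hh := mul_le_mul_of_nonneg_left hhead
      (show (0:ℝ) ≤ (K+1)*m by positivity)
    calc ∑ k ∈ Finset.range (n+1), a n k * w (π/((k:ℝ)+1))^q
        ≤ (K+1)*m*(∑ k ∈ Finset.range (M+1), w (π/((k:ℝ)+1))^q) + w (π/((M:ℝ)+1))^q :=
          hsum1
      _ ≤ (K+1)*m*(2^q * (4*π^r*I)^s + (4*π^r*I)^s + 3^(s-1)*(2*π^r*I)^s)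
          + 4^q * (4*m^r*I)^s := add_le_add hh htail
      _ = Cbig * (m * I^s) := by
          rw [hP, hQ, hR, hCbig_def]
          ring
  have hrhs0 : (0:ℝ) ≤ (m * H m)^q := Real.rpow_nonneg (mul_nonneg hm0.le hHm0) q
  calc ∑ k ∈ Finset.range (n+1), a n k * w (π/((k:ℝ)+1))^q
      ≤ Cbig * (m * I^s) := hfinal
    _ ≤ Cbig * (C₁^q * (m * H m)^q) := mul_le_mul_of_nonneg_left hmIs hCbig0.le
    _ ≤ (Cbig * C₁^q + 1) * (m * H m)^q := by
        nlinarith [hrhs0]
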